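/- For every natural number d ≥ 1, any finite graph G whose chromatic number is at most d can be realized as a (unit) distance graph in R^{2d}; that is, there exists an injective map f from the vertices of G into R^{2d} such that every edge (u,v) of G satisfies |f(u) - f(v)| = 1. -/

import Mathlib

open Real

set_option maxHeartbeats 1000000 in

theorem stmt_0 (d : ℕ) (hd : 1 ≤ d) (V : Type) [Fintype V] (G : SimpleGraph V)
    (hχ : G.chromaticNumber ≤ (d : ℕ∞)) :
    ∃ f : V → EuclideanSpace ℝ (Fin (2 * d)), Function.Injective f ∧
      ∀ u v : V, G.Adj u v → dist (f u) (f v) = 1 := by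
  have hcol : G.Colorable d := SimpleGraph.chromaticNumber_le_iff_colorable.mp hχ
  obtain ⟨C⟩ := hcol
  set n : ℕ := Fintype.card V with hn
  set e := Fintype.equivFin V with he
  set θ : V → ℝ := fun v => π * (e v : ℕ) / n with hθ
  set r : ℝ := Real.sqrt 2 / 2 with hr
  have hr2 : r ^ 2 = 1 / 2 := by
    rw [hr]; rw [div_pow, sq_sqrt (by norm_num : (2:ℝ) ≥ 0)]; norm_num
  have hrne : r ≠ 0 := by
    rw [hr]; positivity
  set f : V → EuclideanSpace ℝ (Fin (2 * d)) := fun v => WithLp.toLp 2 (fun i : Fin (2 * d) =>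
    if (i : ℕ) = 2 * (C v : ℕ) then r * Real.cos (θ v)
    else if (i : ℕ) = 2 * (C v : ℕ) + 1 then r * Real.sin (θ v) else 0) with hf
  -- index helpers
  have hidx : ∀ v : V, 2 * (C v : ℕ) + 1 < 2 * d := by
    intro v; have := (C v).2; omega
  have hθmem : ∀ v : V, θ v ∈ Set.Icc 0 π := by
    intro v
    simp only [hθ, Set.mem_Icc]
    have hn0 : 0 < n := by rw [hn]; exact Fintype.card_pos_iff.mpr ⟨v⟩
    have hk : ((e v : ℕ) : ℝ) < n := by exact_mod_cast (e v).2
    constructor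
    · apply div_nonneg (by positivity) (by positivity)
    · rw [mul_div_assoc]
      have hle : ((e v : ℕ) : ℝ) / n ≤ 1 := by
        rw [div_le_one (by exact_mod_cast hn0)]; exact hk.le
      nlinarith [Real.pi_pos]
  have hθinj : Function.Injective θ := by
    intro u v huv
    have hn0 : 0 < n := by rw [hn]; exact Fintype.card_pos_iff.mpr ⟨v⟩
    have hn0' : (n : ℝ) ≠ 0 := by exact_mod_cast hn0.ne'
    simp only [hθ] at huv
    have : ((e u : ℕ) : ℝ) = ((e v : ℕ) : ℝ) := by
      rw [div_left_inj' hn0', mul_right_inj' Real.pi_ne_zero] at huv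
      exact huv
    have : (e u : ℕ) = (e v : ℕ) := by exact_mod_cast this
    exact e.injective (Fin.ext this)
  have fval : ∀ (w : V) (k : ℕ) (hk : k < 2 * d),
      f w ⟨k, hk⟩ = if k = 2 * (C w : ℕ) then r * Real.cos (θ w)
        else if k = 2 * (C w : ℕ) + 1 then r * Real.sin (θ w) else 0 := fun w k hk => rfl
  refine ⟨f, ?_, ?_⟩
  · intro u v huv
    have happ : ∀ i : Fin (2 * d), f u i = f v i := fun i => congrArg (fun x => x i) huv
    by_cases hc : C u = C v
    · have h1 := happ ⟨2 * (C u : ℕ), by have := hidx u; omega⟩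
      have h2 := happ ⟨2 * (C u : ℕ) + 1, hidx u⟩
      have hcn : 2 * (C u : ℕ) = 2 * (C v : ℕ) := by rw [hc]
      rw [fval, fval, if_pos rfl, if_pos hcn] at h1
      have hcos : Real.cos (θ u) = Real.cos (θ v) := by
        field_simp at h1; tauto
      have := Real.injOn_cos (hθmem u) (hθmem v) hcos
      exact hθinj this
    · have hab : (C u : ℕ) ≠ (C v : ℕ) := fun h => hc (Fin.ext h)
      have h1 := happ ⟨2 * (C u : ℕ), by have := hidx u; omega⟩
      have h2 := happ ⟨2 * (C u : ℕ) + 1, hidx u⟩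
      have c1 : ¬ (2 * (C u : ℕ) = 2 * (C v : ℕ)) := by omega
      have c2 : ¬ (2 * (C u : ℕ) = 2 * (C v : ℕ) + 1) := by omega
      have c3 : ¬ (2 * (C u : ℕ) + 1 = 2 * (C u : ℕ)) := by omega
      have c4 : ¬ (2 * (C u : ℕ) + 1 = 2 * (C v : ℕ)) := by omega
      have c5 : ¬ (2 * (C u : ℕ) + 1 = 2 * (C v : ℕ) + 1) := by omega
      rw [fval, fval, if_pos rfl, if_neg c1, if_neg c2] at h1
      rw [fval, fval, if_neg c3, if_pos rfl, if_neg c4, if_neg c5] at h2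
      have := Real.sin_sq_add_cos_sq (θ u)
      have hc0 : Real.cos (θ u) = 0 := by
        rcases mul_eq_zero.mp h1 with h | h
        · exact absurd h hrne
        · simpa using h
      have hs0 : Real.sin (θ u) = 0 := by
        rcases mul_eq_zero.mp h2 with h | h
        · exact absurd h hrne
        · simpa using h
      rw [hc0, hs0] at this; norm_num at this
  · intro u v hadj
    have hab : (C u : ℕ) ≠ (C v : ℕ) := fun h => C.valid hadj (Fin.ext h)
    set a := (C u : ℕ) with ha
    set b := (C v : ℕ) with hb
    set i1 : Fin (2 * d) := ⟨2 * a, by have := hidx u; omega⟩ with hi1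
    set i2 : Fin (2 * d) := ⟨2 * a + 1, hidx u⟩ with hi2
    set i3 : Fin (2 * d) := ⟨2 * b, by have := hidx v; omega⟩ with hi3
    set i4 : Fin (2 * d) := ⟨2 * b + 1, hidx v⟩ with hi4
    rw [EuclideanSpace.dist_eq]
    have key : ∑ i : Fin (2 * d), dist (f u i) (f v i) ^ 2 = 1 := by
      have hsub : ({i1, i2, i3, i4} : Finset (Fin (2 * d))) ⊆ Finset.univ :=
        Finset.subset_univ _
      rw [← Finset.sum_subset hsub]
      · have hd12 : i1 ≠ i2 := by rw [hi1, hi2]; simp [Fin.ext_iff]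
        have hd13 : i1 ≠ i3 := by rw [hi1, hi3]; simp [Fin.ext_iff]; omega
        have hd14 : i1 ≠ i4 := by rw [hi1, hi4]; simp [Fin.ext_iff]; omega
        have hd23 : i2 ≠ i3 := by rw [hi2, hi3]; simp [Fin.ext_iff]; omega
        have hd24 : i2 ≠ i4 := by rw [hi2, hi4]; simp [Fin.ext_iff]; omega
        have hd34 : i3 ≠ i4 := by rw [hi3, hi4]; simp [Fin.ext_iff]
        rw [Finset.sum_insert (by simp [hd12, hd13, hd14]),
            Finset.sum_insert (by simp [hd23, hd24]),
            Finset.sum_insert (by simp [hd34]), Finset.sum_singleton]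
        have n1 : ¬ (2 * a + 1 = 2 * a) := by omega
        have n2 : ¬ (2 * b = 2 * a) := by omega
        have n3 : ¬ (2 * b = 2 * a + 1) := by omega
        have n4 : ¬ (2 * b + 1 = 2 * a) := by omega
        have n5 : ¬ (2 * b + 1 = 2 * a + 1) := by omega
        have n6 : ¬ (2 * a = 2 * b) := by omega
        have n7 : ¬ (2 * a = 2 * b + 1) := by omega
        have n8 : ¬ (2 * a + 1 = 2 * b) := by omega
        have n9 : ¬ (2 * a + 1 = 2 * b + 1) := by omega
        have n10 : ¬ (2 * b + 1 = 2 * b) := by omega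
        have e1u : f u i1 = r * Real.cos (θ u) := by rw [hi1, fval, if_pos rfl]
        have e2u : f u i2 = r * Real.sin (θ u) := by
          rw [hi2, fval, if_neg n1, if_pos rfl]
        have e3u : f u i3 = 0 := by
          rw [hi3, fval, if_neg n2, if_neg n3]
        have e4u : f u i4 = 0 := by
          rw [hi4, fval, if_neg n4, if_neg n5]
        have e1v : f v i1 = 0 := by
          rw [hi1, fval, if_neg n6, if_neg n7]
        have e2v : f v i2 = 0 := by
          rw [hi2, fval, if_neg n8, if_neg n9]
        have e3v : f v i3 = r * Real.cos (θ v) := by rw [hi3, fval, if_pos rfl]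
        have e4v : f v i4 = r * Real.sin (θ v) := by
          rw [hi4, fval, if_neg n10, if_pos rfl]
        rw [e1u, e2u, e3u, e4u, e1v, e2v, e3v, e4v]
        simp only [Real.dist_eq]
        rw [sq_abs, sq_abs, sq_abs, sq_abs]
        have su := Real.sin_sq_add_cos_sq (θ u)
        have sv := Real.sin_sq_add_cos_sq (θ v)
        nlinarith [su, sv, hr2]
      · intro i _ hi
        simp only [Finset.mem_insert, Finset.mem_singleton, not_or] at hi
        obtain ⟨n1, n2, n3, n4⟩ := hi
        have m1 : (i : ℕ) ≠ 2 * a := fun h => n1 (Fin.ext h)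
        have m2 : (i : ℕ) ≠ 2 * a + 1 := fun h => n2 (Fin.ext h)
        have m3 : (i : ℕ) ≠ 2 * b := fun h => n3 (Fin.ext h)
        have m4 : (i : ℕ) ≠ 2 * b + 1 := fun h => n4 (Fin.ext h)
        have : f u ⟨(i : ℕ), i.2⟩ = 0 := by rw [fval, if_neg m1, if_neg m2]
        have h2 : f v ⟨(i : ℕ), i.2⟩ = 0 := by rw [fval, if_neg m3, if_neg m4]
        simp only [Fin.eta] at this h2
        rw [this, h2]; simp
    rw [key, Real.sqrt_one]
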